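/- arXiv:2405.20451 — 2 statements merged into one kernel-verified Lean document; each statement's English description precedes it below -/
import Mathlib

section
/- (Theorem 3.1, almost-sure eventual validity.) In the setting of the previous statement, suppose additionally that for each N one has P{ d_W(P*, P̂_N) > r_N } ≤ β_N with ∑_{N=1}^∞ β_N < ∞. Then almost surely there exists N₀ such that for all N ≥ N₀: −L·r_N + τ_ε/(1+ε) ≤ J* ≤ E_{P*}[h(x̂_N,ξ)] ≤ k̂_N·r_N + τ_ε. -/
open MeasureTheory

noncomputable section

abbrev Vec (m : ℕ) := EuclideanSpace ℝ (Fin m)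

/-- A coupling of two Borel probability measures on `Vec m`. -/
def IsCoupling {m : ℕ} (γ : Measure (Vec m × Vec m)) (P Q : Measure (Vec m)) : Prop :=
  IsProbabilityMeasure γ ∧ γ.map Prod.fst = P ∧ γ.map Prod.snd = Q

/-- Type-1 Wasserstein distance: infimum of `∫ ‖ξ₁ - ξ₂‖₂ dγ` over couplings `γ`. -/
noncomputable def wDist {m : ℕ} (P Q : Measure (Vec m)) : ℝ :=
  sInf {c : ℝ | ∃ γ : Measure (Vec m × Vec m), IsCoupling γ P Q ∧ c = ∫ p, ‖p.1 - p.2‖ ∂γ}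

/-- `(x, k)` is RS-feasible for reference value `τ` with respect to `Phat`. -/
def RSFeasible {m : ℕ} {X : Type*} (h : X → Vec m → ℝ)
    (Phat : Measure (Vec m)) (τ : ℝ) (x : X) (k : ℝ) : Prop :=
  0 ≤ k ∧ ∀ P : Measure (Vec m), IsProbabilityMeasure P →
    Integrable (fun ξ => ‖ξ‖) P → (∫ ξ, h x ξ ∂P) - τ ≤ k * wDist P Phat

/-- Empirical measure `(1/N) ∑ δ_{x i}`. -/
noncomputable def empMeas {m N : ℕ} (xs : Fin N → Vec m) : Measure (Vec m) :=
  (N : ENNReal)⁻¹ • ∑ i : Fin N, Measure.dirac (xs i)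


lemma le_mul_csInf {S : Set ℝ} (hne : S.Nonempty) (h0 : ∀ c ∈ S, 0 ≤ c) {L a : ℝ}
    (hL : 0 ≤ L) (hle : ∀ c ∈ S, a ≤ L * c) : a ≤ L * sInf S := by
  by_contra hcon
  push_neg at hcon
  rcases hL.eq_or_lt with rfl | hLpos
  · obtain ⟨c, hc⟩ := hne
    have := hle c hc
    simp only [zero_mul] at this hcon
    linarith
  · have h2 : sInf S < a / L := by rwa [lt_div_iff₀ hLpos, mul_comm]
    obtain ⟨c, hcS, hclt⟩ := exists_lt_of_csInf_lt hne h2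
    have := hle c hcS
    nlinarith [mul_lt_mul_of_pos_left hclt hLpos, hle c hcS,
      mul_div_cancel₀ a (ne_of_gt hLpos)]

lemma lipschitz_cont {m : ℕ} {f : Vec m → ℝ} {L : ℝ} (hL : 0 ≤ L)
    (hf : ∀ ξ η, |f ξ - f η| ≤ L * ‖ξ - η‖) : Continuous f := by
  have : LipschitzWith L.toNNReal f := by
    apply LipschitzWith.of_dist_le_mul
    intro x y
    calc dist (f x) (f y) = |f x - f y| := Real.dist_eq _ _
      _ ≤ L * ‖x - y‖ := hf x y
      _ = L.toNNReal * dist x y := by rw [Real.coe_toNNReal L hL, dist_eq_norm]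
  exact this.continuous

/-- Per-coupling Kantorovich-type bound. -/
lemma coupling_bound {m : ℕ} {f : Vec m → ℝ} {L : ℝ} (hL : 0 ≤ L)
    (hf : ∀ ξ η, |f ξ - f η| ≤ L * ‖ξ - η‖)
    {P Q : Measure (Vec m)} (hPp : IsProbabilityMeasure P) (hQp : IsProbabilityMeasure Q)
    (hP : Integrable (fun ξ => ‖ξ‖) P) (hQ : Integrable (fun ξ => ‖ξ‖) Q)
    (hfP : Integrable f P) (hfQ : Integrable f Q)
    {γ : Measure (Vec m × Vec m)} (hγ : IsCoupling γ P Q) :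
    |(∫ ξ, f ξ ∂P) - ∫ ξ, f ξ ∂Q| ≤ L * ∫ p, ‖p.1 - p.2‖ ∂γ := by
  obtain ⟨hγp, hγ1, hγ2⟩ := hγ
  have hfc : Continuous f := lipschitz_cont hL hf
  have hfsm : StronglyMeasurable f := hfc.stronglyMeasurable
  have hnsm : StronglyMeasurable (fun ξ : Vec m => ‖ξ‖) := (continuous_norm).stronglyMeasurable
  -- transfer integrals and integrability along the marginal maps
  have hI1 : ∫ ξ, f ξ ∂P = ∫ p, f p.1 ∂γ := by
    rw [← hγ1, integral_map measurable_fst.aemeasurable hfsm.aestronglyMeasurable]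
  have hI2 : ∫ ξ, f ξ ∂Q = ∫ p, f p.2 ∂γ := by
    rw [← hγ2, integral_map measurable_snd.aemeasurable hfsm.aestronglyMeasurable]
  have hint1 : Integrable (fun p : Vec m × Vec m => f p.1) γ := by
    rw [← hγ1] at hfP
    exact (integrable_map_measure hfsm.aestronglyMeasurable measurable_fst.aemeasurable).mp hfP
  have hint2 : Integrable (fun p : Vec m × Vec m => f p.2) γ := by
    rw [← hγ2] at hfQ
    exact (integrable_map_measure hfsm.aestronglyMeasurable measurable_snd.aemeasurable).mp hfQ
  have hn1 : Integrable (fun p : Vec m × Vec m => ‖p.1‖) γ := by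
    rw [← hγ1] at hP
    exact (integrable_map_measure hnsm.aestronglyMeasurable measurable_fst.aemeasurable).mp hP
  have hn2 : Integrable (fun p : Vec m × Vec m => ‖p.2‖) γ := by
    rw [← hγ2] at hQ
    exact (integrable_map_measure hnsm.aestronglyMeasurable measurable_snd.aemeasurable).mp hQ
  have hcost : Integrable (fun p : Vec m × Vec m => ‖p.1 - p.2‖) γ := by
    refine (hn1.add hn2).mono'
      ((continuous_fst.sub continuous_snd).norm.stronglyMeasurable.aestronglyMeasurable) ?_
    filter_upwards with p
    simpa using norm_sub_le p.1 p.2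
  have key : |∫ p, f p.1 - f p.2 ∂γ| ≤ L * ∫ p, ‖p.1 - p.2‖ ∂γ := by
    calc |∫ p, f p.1 - f p.2 ∂γ| ≤ ∫ p, |f p.1 - f p.2| ∂γ := by
          simpa [Real.norm_eq_abs] using norm_integral_le_integral_norm (fun p : Vec m × Vec m => f p.1 - f p.2) (μ := γ)
      _ ≤ ∫ p, L * ‖p.1 - p.2‖ ∂γ := by
          refine integral_mono (hint1.sub hint2).abs (hcost.const_mul L) ?_
          intro p; exact hf p.1 p.2
      _ = L * ∫ p, ‖p.1 - p.2‖ ∂γ := integral_const_mul _ _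
  rw [hI1, hI2, ← integral_sub hint1 hint2]
  exact key

/-- Kantorovich bound against the Wasserstein distance. -/
lemma kantorovich {m : ℕ} {f : Vec m → ℝ} {L : ℝ} (hL : 0 ≤ L)
    (hf : ∀ ξ η, |f ξ - f η| ≤ L * ‖ξ - η‖)
    {P Q : Measure (Vec m)} (hPp : IsProbabilityMeasure P) (hQp : IsProbabilityMeasure Q)
    (hP : Integrable (fun ξ => ‖ξ‖) P) (hQ : Integrable (fun ξ => ‖ξ‖) Q)
    (hfP : Integrable f P) (hfQ : Integrable f Q) :
    |(∫ ξ, f ξ ∂P) - ∫ ξ, f ξ ∂Q| ≤ L * wDist P Q := by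
  haveI := hPp; haveI := hQp
  apply le_mul_csInf
  · refine ⟨∫ p, ‖p.1 - p.2‖ ∂(P.prod Q), P.prod Q, ⟨inferInstance, ?_, ?_⟩, rfl⟩
    · simp [Measure.map_fst_prod]
    · simp [Measure.map_snd_prod]
  · rintro c ⟨γ, hγ, rfl⟩
    exact integral_nonneg (fun p => norm_nonneg _)
  · exact hL
  · rintro c ⟨γ, hγ, rfl⟩
    exact coupling_bound hL hf hPp hQp hP hQ hfP hfQ hγ

lemma empMeas_prob {m N : ℕ} (hN : N ≠ 0) (xs : Fin N → Vec m) :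
    IsProbabilityMeasure (empMeas xs) := by
  constructor
  simp only [empMeas, Measure.smul_apply, Measure.coe_finset_sum, Finset.sum_apply,
    Measure.dirac_apply_of_mem (Set.mem_univ _), Finset.sum_const, Finset.card_univ,
    Fintype.card_fin, nsmul_eq_mul, mul_one, smul_eq_mul]
  rw [ENNReal.inv_mul_cancel]
  · exact Nat.cast_ne_zero.mpr hN
  · exact ENNReal.natCast_ne_top N

lemma empMeas_integrable {m N : ℕ} (hN : N ≠ 0) (xs : Fin N → Vec m) {f : Vec m → ℝ}
    (hfsm : StronglyMeasurable f) : Integrable f (empMeas xs) := by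
  unfold empMeas
  refine Integrable.smul_measure ?_ (by simp [hN])
  refine integrable_finset_sum_measure.mpr fun i _ => ?_
  exact (integrable_const (f (xs i))).congr (ae_eq_dirac f).symm


/-- Theorem 3.1, almost-sure eventual validity: if the tail bounds
hold with summable beta_N, then almost surely the confidence chain holds for all
sufficiently large N. -/
theorem confidence_interval_eventually_almost_surely {m : ℕ}
    {X : Type*} [Nonempty X]
    {Ω : Type*} [MeasurableSpace Ω] (μ : Measure Ω) [IsProbabilityMeasure μ]
    (h : X → Vec m → ℝ) (L : ℝ) (hL : 0 ≤ L)
    (hLip : ∀ x ξ η, |h x ξ - h x η| ≤ L * ‖ξ - η‖)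
    (hInt : ∀ x (P : Measure (Vec m)), IsProbabilityMeasure P →
      Integrable (fun ξ => ‖ξ‖) P → Integrable (h x) P)
    (Pstar : Measure (Vec m)) [IsProbabilityMeasure Pstar]
    (hPstarmom : Integrable (fun ξ => ‖ξ‖) Pstar)
    -- i.i.d. samples from Pstar
    (ξs : ℕ → Ω → Vec m) (hmeas : ∀ i, Measurable (ξs i))
    (hindep : ProbabilityTheory.iIndepFun ξs μ)
    (hdist : ∀ i, μ.map (ξs i) = Pstar)
    -- empirical measures
    (Phat : (N : ℕ) → Ω → Measure (Vec m))
    (hPhat : ∀ N ω, Phat N ω = empMeas (fun i : Fin N => ξs i ω))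
    -- reference values
    (ε : ℝ) (hε : 0 < ε)
    (τ : (N : ℕ) → Ω → ℝ)
    (hτ : ∀ N ω, τ N ω = (1 + ε) * ⨅ x, ∫ ξ, h x ξ ∂(Phat N ω))
    (hfin : ∀ N, ∀ᵐ ω ∂μ, BddBelow (Set.range fun x => ∫ ξ, h x ξ ∂(Phat N ω)))
    -- almost surely RS-feasible random pairs
    (xhat : (N : ℕ) → Ω → X) (khat : (N : ℕ) → Ω → ℝ)
    (hfeas : ∀ N, ∀ᵐ ω ∂μ, RSFeasible h (Phat N ω) (τ N ω) (xhat N ω) (khat N ω))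
    -- concentration of the empirical measures, with summable confidence levels
    (r β : ℕ → ℝ) (hr : ∀ N, 0 < r N) (hβ0 : ∀ N, 0 < β N) (hβ1 : ∀ N, β N < 1)
    (htail : ∀ N, μ {ω | r N < wDist Pstar (Phat N ω)} ≤ ENNReal.ofReal (β N))
    (hsum : Summable β) :
    ∀ᵐ ω ∂μ, ∃ N₀ : ℕ, ∀ N ≥ N₀,
      -L * r N + τ N ω / (1 + ε) ≤ (⨅ x, ∫ ξ, h x ξ ∂Pstar) ∧
      (⨅ x, ∫ ξ, h x ξ ∂Pstar) ≤ (∫ ξ, h (xhat N ω) ξ ∂Pstar) ∧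
      (∫ ξ, h (xhat N ω) ξ ∂Pstar) ≤ khat N ω * r N + τ N ω := by
  have h1ε : (1 : ℝ) + ε ≠ 0 := by positivity
  -- Borel–Cantelli
  have hBC : ∀ᵐ ω ∂μ, ∀ᶠ N in Filter.atTop,
      ω ∉ {ω | r N < wDist Pstar (Phat N ω)} := by
    apply MeasureTheory.ae_eventually_notMem
    have hle : (∑' N, μ {ω | r N < wDist Pstar (Phat N ω)}) ≤ ∑' N, ENNReal.ofReal (β N) :=
      ENNReal.tsum_le_tsum htail
    have heq : (∑' N, ENNReal.ofReal (β N)) = ENNReal.ofReal (∑' N, β N) :=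
      (ENNReal.ofReal_tsum_of_nonneg (fun N => (hβ0 N).le) hsum).symm
    exact ne_top_of_le_ne_top (by rw [heq]; exact ENNReal.ofReal_ne_top) hle
  filter_upwards [hBC, (MeasureTheory.ae_all_iff).mpr hfin, (MeasureTheory.ae_all_iff).mpr hfeas]
    with ω hw hbddall hfeasall
  obtain ⟨N₁, hN₁⟩ := Filter.eventually_atTop.mp hw
  refine ⟨max N₁ 1, fun N hN => ?_⟩
  have hN0 : N ≠ 0 := by
    have := le_trans (le_max_right N₁ 1) hN; omega
  have hwN : wDist Pstar (Phat N ω) ≤ r N :=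
    not_lt.mp (hN₁ N (le_trans (le_max_left _ _) hN))
  haveI hQp : IsProbabilityMeasure (Phat N ω) := by
    rw [hPhat]; exact empMeas_prob hN0 _
  have hQnorm : Integrable (fun ξ => ‖ξ‖) (Phat N ω) := by
    rw [hPhat]; exact empMeas_integrable hN0 _ continuous_norm.stronglyMeasurable
  have hbdd : BddBelow (Set.range fun x => ∫ ξ, h x ξ ∂(Phat N ω)) := hbddall N
  obtain ⟨hk0, hkfeas⟩ := hfeasall N
  have hKant : ∀ x, |(∫ ξ, h x ξ ∂Pstar) - ∫ ξ, h x ξ ∂(Phat N ω)|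
      ≤ L * wDist Pstar (Phat N ω) := fun x =>
    kantorovich hL (hLip x) inferInstance hQp hPstarmom hQnorm
      (hInt x Pstar inferInstance hPstarmom) (hInt x (Phat N ω) hQp hQnorm)
  have hLw : L * wDist Pstar (Phat N ω) ≤ L * r N := mul_le_mul_of_nonneg_left hwN hL
  have hlow : ∀ x, (⨅ x, ∫ ξ, h x ξ ∂(Phat N ω)) - L * r N ≤ ∫ ξ, h x ξ ∂Pstar := by
    intro x
    have h1 : (⨅ x', ∫ ξ, h x' ξ ∂(Phat N ω)) ≤ ∫ ξ, h x ξ ∂(Phat N ω) := ciInf_le hbdd x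
    have h2 := (abs_le.mp (hKant x)).1
    linarith
  have hbP : BddBelow (Set.range fun x => ∫ ξ, h x ξ ∂Pstar) :=
    ⟨(⨅ x, ∫ ξ, h x ξ ∂(Phat N ω)) - L * r N, by rintro _ ⟨x, rfl⟩; exact hlow x⟩
  have hτeq : τ N ω / (1 + ε) = ⨅ x, ∫ ξ, h x ξ ∂(Phat N ω) := by
    rw [hτ, mul_div_cancel_left₀ _ h1ε]
  refine ⟨?_, ciInf_le hbP (xhat N ω), ?_⟩
  · rw [hτeq]
    have := le_ciInf hlow
    linarith
  · have hfs := hkfeas Pstar inferInstance hPstarmom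
    have h3 : khat N ω * wDist Pstar (Phat N ω) ≤ khat N ω * r N :=
      mul_le_mul_of_nonneg_left hwN hk0
    linarith
end
end

section
/- (Theorem 4.1, deterministic generalization bound under distribution shift.) Let P̃ and P* be Borel probability measures on ℝ^m with finite first moments, let ε > 0, τ_ε := (1+ε)·inf_{x∈𝒳} E_{P̂}[h(x,ξ)] (assumed finite), J̃ := inf_{x∈𝒳} E_{P̃}[h(x,ξ)] (assumed finite), and suppose (x̂, k̂) ∈ 𝒳 × [0,∞) is RS-feasible for τ_ε with respect to P̂. Then E_{P̃}[h(x̂,ξ)] − J̃ ≤ ε·J̃ + (2+ε)·L·d_W(P*, P̃) + (2+ε)·L·d_W(P*, P̂). -/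
open MeasureTheory

noncomputable section

-- product coupling
lemma prod_isCoupling {m : ℕ} (P Q : Measure (Vec m))
    [IsProbabilityMeasure P] [IsProbabilityMeasure Q] :
    IsCoupling (P.prod Q) P Q := by
  refine ⟨inferInstance, ?_, ?_⟩
  · simp [Measure.map_fst_prod]
  · simp [Measure.map_snd_prod]

lemma wDist_set_nonempty {m : ℕ} (P Q : Measure (Vec m))
    [IsProbabilityMeasure P] [IsProbabilityMeasure Q] :
    {c : ℝ | ∃ γ : Measure (Vec m × Vec m), IsCoupling γ P Q ∧ c = ∫ p, ‖p.1 - p.2‖ ∂γ}.Nonempty :=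
  ⟨_, P.prod Q, prod_isCoupling P Q, rfl⟩

lemma wDist_set_nonneg {m : ℕ} (P Q : Measure (Vec m)) :
    ∀ c ∈ {c : ℝ | ∃ γ : Measure (Vec m × Vec m), IsCoupling γ P Q ∧ c = ∫ p, ‖p.1 - p.2‖ ∂γ},
      0 ≤ c := by
  rintro c ⟨γ, _, rfl⟩
  exact integral_nonneg fun p => norm_nonneg _

lemma abs_integral_sub_le {m : ℕ} {X : Type*} (h : X → Vec m → ℝ) (L : ℝ) (hL : 0 ≤ L)
    (hLip : ∀ x ξ η, |h x ξ - h x η| ≤ L * ‖ξ - η‖) (x : X)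
    (P Q : Measure (Vec m)) [IsProbabilityMeasure P] [IsProbabilityMeasure Q]
    (hPmom : Integrable (fun ξ => ‖ξ‖) P) (hQmom : Integrable (fun ξ => ‖ξ‖) Q)
    (hIntP : Integrable (h x) P) (hIntQ : Integrable (h x) Q) :
    |(∫ ξ, h x ξ ∂P) - ∫ ξ, h x ξ ∂Q| ≤ L * wDist P Q := by
  have hcont : Continuous (h x) := by
    apply LipschitzWith.continuous (K := L.toNNReal)
    apply LipschitzWith.of_dist_le_mul
    intro ξ η
    rw [Real.dist_eq, Real.coe_toNNReal _ hL]
    calc |h x ξ - h x η| ≤ L * ‖ξ - η‖ := hLip x ξ η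
    _ = L * dist ξ η := by rw [dist_eq_norm]
  -- per-coupling bound
  have key : ∀ γ : Measure (Vec m × Vec m), IsCoupling γ P Q →
      |(∫ ξ, h x ξ ∂P) - ∫ ξ, h x ξ ∂Q| ≤ L * ∫ p, ‖p.1 - p.2‖ ∂γ := by
    rintro γ ⟨hγprob, hfst, hsnd⟩
    have h1 : Integrable (fun p : Vec m × Vec m => h x p.1) γ := by
      have : Integrable (h x) (γ.map Prod.fst) := hfst ▸ hIntP
      exact (integrable_map_measure hcont.aestronglyMeasurable measurable_fst.aemeasurable).mp this
    have h2 : Integrable (fun p : Vec m × Vec m => h x p.2) γ := by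
      have : Integrable (h x) (γ.map Prod.snd) := hsnd ▸ hIntQ
      exact (integrable_map_measure hcont.aestronglyMeasurable measurable_snd.aemeasurable).mp this
    have hn1 : Integrable (fun p : Vec m × Vec m => ‖p.1‖) γ := by
      have : Integrable (fun ξ : Vec m => ‖ξ‖) (γ.map Prod.fst) := hfst ▸ hPmom
      exact (integrable_map_measure (continuous_norm.aestronglyMeasurable)
        measurable_fst.aemeasurable).mp this
    have hn2 : Integrable (fun p : Vec m × Vec m => ‖p.2‖) γ := by
      have : Integrable (fun ξ : Vec m => ‖ξ‖) (γ.map Prod.snd) := hsnd ▸ hQmom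
      exact (integrable_map_measure (continuous_norm.aestronglyMeasurable)
        measurable_snd.aemeasurable).mp this
    have hnorm : Integrable (fun p : Vec m × Vec m => ‖p.1 - p.2‖) γ := by
      refine (hn1.add hn2).mono' ?_ ?_
      · exact (continuous_fst.sub continuous_snd).norm.aestronglyMeasurable
      · filter_upwards with p
        simpa using norm_sub_le p.1 p.2
    have hIP : (∫ ξ, h x ξ ∂P) = ∫ p, h x p.1 ∂γ := by
      rw [← hfst, integral_map measurable_fst.aemeasurable hcont.aestronglyMeasurable]
    have hIQ : (∫ ξ, h x ξ ∂Q) = ∫ p, h x p.2 ∂γ := by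
      rw [← hsnd, integral_map measurable_snd.aemeasurable hcont.aestronglyMeasurable]
    rw [hIP, hIQ, ← integral_sub h1 h2]
    calc |∫ p, (h x p.1 - h x p.2) ∂γ| ≤ ∫ p, |h x p.1 - h x p.2| ∂γ := by
          simpa using norm_integral_le_integral_norm (fun p : Vec m × Vec m => h x p.1 - h x p.2)
      _ ≤ ∫ p, L * ‖p.1 - p.2‖ ∂γ := by
          refine integral_mono (h1.sub h2).abs (hnorm.const_mul L) ?_
          intro p; exact hLip x p.1 p.2
      _ = L * ∫ p, ‖p.1 - p.2‖ ∂γ := integral_const_mul L _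
  rcases eq_or_lt_of_le hL with hL0 | hLpos
  · obtain ⟨c, γ, hγ, rfl⟩ := wDist_set_nonempty P Q
    have := key γ hγ
    rw [← hL0] at this ⊢
    simp only [zero_mul] at this ⊢
    exact this
  · rw [← div_le_iff₀' hLpos]
    refine le_csInf (wDist_set_nonempty P Q) ?_
    rintro c ⟨γ, hγ, rfl⟩
    rw [div_le_iff₀' hLpos]
    exact key γ hγ

lemma wDist_self_nonpos {m : ℕ} (P : Measure (Vec m)) [IsProbabilityMeasure P] :
    wDist P P ≤ 0 := by
  apply csInf_le
  · exact ⟨0, wDist_set_nonneg P P⟩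
  · have hdiag : Measurable (fun ξ : Vec m => (ξ, ξ)) := measurable_id.prodMk measurable_id
    refine ⟨P.map (fun ξ => (ξ, ξ)), ⟨?_, ?_, ?_⟩, ?_⟩
    · exact Measure.isProbabilityMeasure_map hdiag.aemeasurable
    · rw [Measure.map_map measurable_fst hdiag]
      have : (Prod.fst ∘ fun ξ : Vec m => (ξ, ξ)) = id := rfl
      rw [this, Measure.map_id]
    · rw [Measure.map_map measurable_snd hdiag]
      have : (Prod.snd ∘ fun ξ : Vec m => (ξ, ξ)) = id := rfl
      rw [this, Measure.map_id]
    · rw [integral_map hdiag.aemeasurable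
        ((show Continuous (fun p : Vec m × Vec m => ‖p.1 - p.2‖) from
          (continuous_fst.sub continuous_snd).norm).aestronglyMeasurable)]
      simp

/-- Theorem 4.1, deterministic generalization bound under shift:
E_{Ptilde}[h(xhat,.)] - Jtilde <= eps Jtilde + (2+eps) L d_W(P*,Ptilde)
  + (2+eps) L d_W(P*,Phat). -/
theorem deterministic_generalization_bound_shift {m : ℕ} {X : Type*} [Nonempty X]
    (h : X → Vec m → ℝ) (L : ℝ) (hL : 0 ≤ L)
    (hLip : ∀ x ξ η, |h x ξ - h x η| ≤ L * ‖ξ - η‖)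
    (Pstar Ptilde Phat : Measure (Vec m))
    [IsProbabilityMeasure Pstar] [IsProbabilityMeasure Ptilde] [IsProbabilityMeasure Phat]
    (hPstarmom : Integrable (fun ξ => ‖ξ‖) Pstar)
    (hPtildemom : Integrable (fun ξ => ‖ξ‖) Ptilde)
    (hPhatmom : Integrable (fun ξ => ‖ξ‖) Phat)
    (hIntPstar : ∀ x, Integrable (h x) Pstar)
    (hIntPtilde : ∀ x, Integrable (h x) Ptilde)
    (hIntPhat : ∀ x, Integrable (h x) Phat)
    (ε : ℝ) (hε : 0 < ε)
    (τ : ℝ) (hτ : τ = (1 + ε) * ⨅ x, ∫ ξ, h x ξ ∂Phat)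
    (hfinPhat : BddBelow (Set.range fun x => ∫ ξ, h x ξ ∂Phat))
    (hfinPtilde : BddBelow (Set.range fun x => ∫ ξ, h x ξ ∂Ptilde))
    (xhat : X) (khat : ℝ) (hfeas : RSFeasible h Phat τ xhat khat) :
    (∫ ξ, h xhat ξ ∂Ptilde) - (⨅ x, ∫ ξ, h x ξ ∂Ptilde) ≤
      ε * (⨅ x, ∫ ξ, h x ξ ∂Ptilde) + (2 + ε) * L * wDist Pstar Ptilde
        + (2 + ε) * L * wDist Pstar Phat := by
  obtain ⟨hk, hfeas⟩ := hfeas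
  set w1 := wDist Pstar Ptilde with hw1
  set w2 := wDist Pstar Phat with hw2
  set Jhat := ⨅ x, ∫ ξ, h x ξ ∂Phat with hJhat
  set Jtilde := ⨅ x, ∫ ξ, h x ξ ∂Ptilde with hJtilde
  -- step 1: feasibility at Phat gives ∫ h xhat dPhat ≤ τ
  have step1 : (∫ ξ, h xhat ξ ∂Phat) ≤ τ := by
    have := hfeas Phat inferInstance hPhatmom
    have hw0 : khat * wDist Phat Phat ≤ 0 :=
      mul_nonpos_of_nonneg_of_nonpos hk (wDist_self_nonpos Phat)
    linarith
  -- dual bounds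
  have dPT : ∀ x, |(∫ ξ, h x ξ ∂Pstar) - ∫ ξ, h x ξ ∂Ptilde| ≤ L * w1 := fun x =>
    abs_integral_sub_le h L hL hLip x Pstar Ptilde hPstarmom hPtildemom (hIntPstar x) (hIntPtilde x)
  have dPH : ∀ x, |(∫ ξ, h x ξ ∂Pstar) - ∫ ξ, h x ξ ∂Phat| ≤ L * w2 := fun x =>
    abs_integral_sub_le h L hL hLip x Pstar Phat hPstarmom hPhatmom (hIntPstar x) (hIntPhat x)
  -- step 2: ∫ h xhat dPtilde ≤ τ + L*w1 + L*w2
  have step2 : (∫ ξ, h xhat ξ ∂Ptilde) ≤ τ + L * w1 + L * w2 := by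
    have h1 := abs_le.mp (dPT xhat)
    have h2 := abs_le.mp (dPH xhat)
    linarith
  -- step 3: Jhat ≤ Jtilde + L*w1 + L*w2
  have step3 : Jhat ≤ Jtilde + L * w1 + L * w2 := by
    have : ∀ x, Jhat - (L * w1 + L * w2) ≤ ∫ ξ, h x ξ ∂Ptilde := by
      intro x
      have h1 := abs_le.mp (dPT x)
      have h2 := abs_le.mp (dPH x)
      have hle : Jhat ≤ ∫ ξ, h x ξ ∂Phat := ciInf_le hfinPhat x
      linarith
    have := le_ciInf this
    rw [← hJtilde] at this
    linarith
  -- combine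
  have hτle : τ ≤ (1 + ε) * (Jtilde + L * w1 + L * w2) := by
    rw [hτ]
    exact mul_le_mul_of_nonneg_left step3 (by linarith)
  nlinarith [step1, step2]
end
end
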